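/- Let n ∈ ℕ, g' a finite partial injection on ℕ, and m > max({n} ∪ dom(g') ∪ im(g')) with g'↾n defined. For every partial injection h with h↾n = g'↾n, writing h₁ = h↾n and h₂ = h \ h₁, and choosing an injective function l : im(h₂) → ℕ \ {0,…,m−1}, we have h = (id_n ∪ h₂l) ∘ (g' ∪ l^{-1}), where id_n is the identity on {0,…,n−1}. Consequently U_{n,g'} := {h : h↾n = g'↾n} ⊆ (↑id_n) · U_{m,g'}, where ↑id_n = {f : id_n ⊆ f} and U_{m,g'} = {f : f↾m = g'↾m}. -/
import Mathlib


open Set Classical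

noncomputable section

/-- A partial injection (partial bijection) on ℕ, viewed as a set of pairs. -/
def IsPInj (g : Set (ℕ × ℕ)) : Prop :=
  ∀ ⦃a b c d : ℕ⦄, (a, b) ∈ g → (c, d) ∈ g → (a = c ↔ b = d)

/-- Domain of a partial injection. -/
def pdom (g : Set (ℕ × ℕ)) : Set ℕ := {x | ∃ y, (x, y) ∈ g}

/-- Image of a partial injection. -/
def pim (g : Set (ℕ × ℕ)) : Set ℕ := {y | ∃ x, (x, y) ∈ g}

/-- Restriction of a partial injection to `{0, …, r-1}`. -/
def pres (g : Set (ℕ × ℕ)) (r : ℕ) : Set (ℕ × ℕ) := {p ∈ g | p.1 < r}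

/-- A waning function `f : ω + 1 → ω + 1`. -/
def Waning (f : ℕ∞ → ℕ∞) : Prop :=
  Antitone f ∧
    ((∀ i, f i = ⊤) ∨
      ((∃ i : ℕ, f i ≠ ⊤) ∧
        ∀ j : ℕ, f j ≠ 0 → f j ≠ ⊤ → f ((j + 1 : ℕ)) < f j))

/-- Composition of partial injections, as relations (apply the left one first,
following the paper's left-to-right convention). -/
def pcomp (g h : Set (ℕ × ℕ)) : Set (ℕ × ℕ) := {p | ∃ b, (p.1, b) ∈ g ∧ (b, p.2) ∈ h}

/-- For `m > max({n} ∪ dom g' ∪ im g')`, every partial injection `h` with `h↾n = g'↾n`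
factors as `h = (id_n ∪ h₂l) ∘ (g' ∪ l⁻¹)`, where `h₁ = h↾n`, `h₂ = h \ h₁`, and
`l : im(h₂) → ℕ \ {0,…,m−1}` is injective.  Consequently
`U_{n,g'} ⊆ (↑id_n) · U_{m,g'}`. -/
theorem factorization_lemma (n m : ℕ) (g' : Set (ℕ × ℕ)) (hg' : IsPInj g')
    (hg'fin : g'.Finite) (hnm : n < m)
    (hm : ∀ p ∈ g', (p : ℕ × ℕ).1 < m ∧ (p : ℕ × ℕ).2 < m) :
    (∀ h : Set (ℕ × ℕ), IsPInj h → pres h n = pres g' n →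
      ∀ l : ℕ → ℕ, Set.InjOn l (pim (h \ pres h n)) →
        (∀ y ∈ pim (h \ pres h n), m ≤ l y) →
        h = pcomp
          ({p : ℕ × ℕ | p.1 = p.2 ∧ p.1 < n} ∪
            (fun p : ℕ × ℕ => (p.1, l p.2)) '' (h \ pres h n))
          (g' ∪ (fun b : ℕ => (l b, b)) '' pim (h \ pres h n))) ∧
    {h : Set (ℕ × ℕ) | IsPInj h ∧ pres h n = pres g' n} ⊆
      {k : Set (ℕ × ℕ) | ∃ a b : Set (ℕ × ℕ), IsPInj a ∧
        {p : ℕ × ℕ | p.1 = p.2 ∧ p.1 < n} ⊆ a ∧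
        IsPInj b ∧ pres b m = pres g' m ∧ k = pcomp a b} := by
  constructor
  · -- Part 1
    intro h hh hres l hlinj hlm
    have h2mem : ∀ p : ℕ × ℕ, p ∈ h \ pres h n ↔ p ∈ h ∧ n ≤ p.1 := by
      intro p
      constructor
      · rintro ⟨hp, hnp⟩
        refine ⟨hp, ?_⟩
        by_contra hc
        exact hnp ⟨hp, not_le.mp hc⟩
      · rintro ⟨hp, hnp⟩
        exact ⟨hp, fun hc => absurd hc.2 (not_lt.mpr hnp)⟩
    ext ⟨x, z⟩
    constructor
    · intro hxz
      by_cases hx : x < n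
      · refine ⟨x, Or.inl ⟨rfl, hx⟩, Or.inl ?_⟩
        have hp : (x, z) ∈ pres h n := ⟨hxz, hx⟩
        rw [hres] at hp
        exact hp.1
      · have hp2 : (x, z) ∈ h \ pres h n := (h2mem _).mpr ⟨hxz, not_lt.mp hx⟩
        exact ⟨l z, Or.inr ⟨(x, z), hp2, rfl⟩, Or.inr ⟨z, ⟨x, hp2⟩, rfl⟩⟩
    · rintro ⟨c, hA, hB⟩
      rcases hA with ⟨hcx, hxn⟩ | ⟨p, hp, hpe⟩
      · simp only at hcx hxn
        subst hcx
        rcases hB with hg | ⟨y, hy, hye⟩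
        · have : (x, z) ∈ pres g' n := ⟨hg, hxn⟩
          rw [← hres] at this
          exact this.1
        · simp only [Prod.mk.injEq] at hye
          have := hlm y hy
          omega
      · simp only [Prod.mk.injEq] at hpe
        obtain ⟨hpx, hpc⟩ := hpe
        rcases hB with hg | ⟨y, hy, hye⟩
        · have h1 := (hm _ hg).1
          have h2 := hlm p.2 ⟨p.1, hp⟩
          simp only at h1
          omega
        · simp only [Prod.mk.injEq] at hye
          obtain ⟨hly, hyz⟩ := hye
          have hpy : p.2 = y := hlinj ⟨p.1, hp⟩ hy (by rw [hpc, hly])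
          have : p = (x, z) := by
            have : p.2 = z := by rw [hpy, hyz]
            exact Prod.ext hpx this
          rw [← this]
          exact ((h2mem p).mp hp).1
  · -- Part 2
    rintro h ⟨hh, hres⟩
    have h2mem : ∀ p : ℕ × ℕ, p ∈ h \ pres h n ↔ p ∈ h ∧ n ≤ p.1 := by
      intro p
      constructor
      · rintro ⟨hp, hnp⟩
        refine ⟨hp, ?_⟩
        by_contra hc
        exact hnp ⟨hp, not_le.mp hc⟩
      · rintro ⟨hp, hnp⟩
        exact ⟨hp, fun hc => absurd hc.2 (not_lt.mpr hnp)⟩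
    set h2 : Set (ℕ × ℕ) := h \ pres h n with h2def
    -- a preimage under g' of elements of pim h2, if any, is ≥ n and < m
    have key : ∀ y ∈ pim h2, ∀ x', (x', y) ∈ g' → n ≤ x' := by
      rintro y ⟨x, hx⟩ x' hx'
      by_contra hc
      have hx'h : (x', y) ∈ h := by
        have : (x', y) ∈ pres g' n := ⟨hx', not_le.mp hc⟩
        rw [← hres] at this
        exact this.1
      have hxh := (h2mem _).mp hx
      have : x' = x := (hh hx'h hxh.1).mpr rfl
      omega
    classical
    set r : ℕ → ℕ := fun y => if hy : ∃ x', (x', y) ∈ g' then hy.choose else y + m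
      with rdef
    have rg : ∀ y, (∃ x', (x', y) ∈ g') → (r y, y) ∈ g' := by
      intro y hy
      simp only [rdef, dif_pos hy]
      exact hy.choose_spec
    have rng : ∀ y, ¬ (∃ x', (x', y) ∈ g') → r y = y + m := by
      intro y hy
      simp only [rdef, dif_neg hy]
    -- r y ≥ n on pim h2
    have rge : ∀ y ∈ pim h2, n ≤ r y := by
      intro y hy
      by_cases hc : ∃ x', (x', y) ∈ g'
      · exact key y hy _ (rg y hc)
      · rw [rng y hc]; omega
    -- r injective on pim h2
    have rinj : ∀ y₁ ∈ pim h2, ∀ y₂ ∈ pim h2, r y₁ = r y₂ → y₁ = y₂ := by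
      intro y₁ h₁ y₂ h₂ he
      by_cases hc1 : ∃ x', (x', y₁) ∈ g' <;> by_cases hc2 : ∃ x', (x', y₂) ∈ g'
      · exact (hg' (rg y₁ hc1) (rg y₂ hc2)).mp he
      · have := (hm _ (rg y₁ hc1)).1
        rw [rng y₂ hc2] at he
        simp only at this
        omega
      · have := (hm _ (rg y₂ hc2)).1
        rw [rng y₁ hc1] at he
        simp only at this
        omega
      · rw [rng y₁ hc1, rng y₂ hc2] at he
        omega
    refine ⟨{p : ℕ × ℕ | p.1 = p.2 ∧ p.1 < n} ∪ (fun p : ℕ × ℕ => (p.1, r p.2)) '' h2,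
      g' ∪ (fun y : ℕ => (y + m, y)) '' (pim h2 \ pim g'), ?_, ?_, ?_, ?_, ?_⟩
    · -- IsPInj a
      rintro a b c d (⟨hab, han⟩ | ⟨p, hp, hpe⟩) (⟨hcd, hcn⟩ | ⟨q, hq, hqe⟩)
      · simp only at *
        subst hab; subst hcd
        exact Iff.rfl
      · simp only [Prod.mk.injEq] at *
        obtain ⟨hq1, hq2⟩ := hqe
        have hqn := ((h2mem q).mp hq).2
        have hrn := rge q.2 ⟨q.1, hq⟩
        subst hab
        omega
      · simp only [Prod.mk.injEq] at *
        obtain ⟨hp1, hp2⟩ := hpe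
        have hpn := ((h2mem p).mp hp).2
        have hrn := rge p.2 ⟨p.1, hp⟩
        subst hcd
        omega
      · simp only [Prod.mk.injEq] at hpe hqe
        obtain ⟨hp1, hp2⟩ := hpe
        obtain ⟨hq1, hq2⟩ := hqe
        subst hp1; subst hp2; subst hq1; subst hq2
        have hiff := hh ((h2mem p).mp hp).1 ((h2mem q).mp hq).1
        constructor
        · intro hac
          exact congrArg r (hiff.mp hac)
        · intro hbd
          exact hiff.mpr (rinj p.2 ⟨p.1, hp⟩ q.2 ⟨q.1, hq⟩ hbd)
    · -- id_n ⊆ a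
      exact subset_union_left
    · -- IsPInj b
      rintro a b c d (hab | ⟨y, hy, hye⟩) (hcd | ⟨y', hy', hye'⟩)
      · exact hg' hab hcd
      · simp only [Prod.mk.injEq] at hye'
        obtain ⟨h1, h2⟩ := hye'
        have := (hm _ hab).1
        simp only at this
        constructor
        · intro; omega
        · intro hbd
          exact absurd ⟨a, hbd ▸ hab⟩ (h2 ▸ hy'.2)
      · simp only [Prod.mk.injEq] at hye
        obtain ⟨h1, h2⟩ := hye
        have := (hm _ hcd).1
        simp only at this
        constructor
        · intro; omega
        · intro hbd
          exact absurd ⟨c, hbd ▸ hcd⟩ (h2 ▸ hy.2)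
      · simp only [Prod.mk.injEq] at hye hye'
        obtain ⟨h1, h2⟩ := hye
        obtain ⟨h1', h2'⟩ := hye'
        subst h1; subst h2; subst h1'; subst h2'
        omega
    · -- pres b m = pres g' m
      ext ⟨x, z⟩
      constructor
      · rintro ⟨hg | ⟨y, hy, hye⟩, hlt⟩
        · exact ⟨hg, hlt⟩
        · simp only [Prod.mk.injEq] at hye
          simp only at hlt
          omega
      · rintro ⟨hg, hlt⟩
        exact ⟨Or.inl hg, hlt⟩
    · -- h = pcomp a b
      ext ⟨x, z⟩
      constructor
      · intro hxz
        by_cases hx : x < n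
        · refine ⟨x, Or.inl ⟨rfl, hx⟩, Or.inl ?_⟩
          have hp : (x, z) ∈ pres h n := ⟨hxz, hx⟩
          rw [hres] at hp
          exact hp.1
        · have hp2 : (x, z) ∈ h2 := (h2mem _).mpr ⟨hxz, not_lt.mp hx⟩
          refine ⟨r z, Or.inr ⟨(x, z), hp2, rfl⟩, ?_⟩
          by_cases hc : ∃ x', (x', z) ∈ g'
          · exact Or.inl (rg z hc)
          · rw [rng z hc]
            exact Or.inr ⟨z, ⟨⟨x, hp2⟩, fun ⟨x', hx'⟩ => hc ⟨x', hx'⟩⟩, rfl⟩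
      · rintro ⟨c, hA, hB⟩
        rcases hA with ⟨hcx, hxn⟩ | ⟨p, hp, hpe⟩
        · simp only at hcx hxn
          subst hcx
          rcases hB with hg | ⟨y, hy, hye⟩
          · have : (x, z) ∈ pres g' n := ⟨hg, hxn⟩
            rw [← hres] at this
            exact this.1
          · simp only [Prod.mk.injEq] at hye
            omega
        · simp only [Prod.mk.injEq] at hpe
          obtain ⟨hpx, hpc⟩ := hpe
          have hph := (h2mem p).mp hp
          by_cases hc : ∃ x', (x', p.2) ∈ g'
          · have hrg := rg p.2 hc
            rcases hB with hg | ⟨y, hy, hye⟩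
            · have hz : z = p.2 := by
                have := hg' hg hrg
                rw [hpc] at this
                exact (this.mp rfl)
              have : p = (x, z) := Prod.ext hpx (hz.symm)
              rw [← this]
              exact hph.1
            · simp only [Prod.mk.injEq] at hye
              obtain ⟨h1, h2⟩ := hye
              have := (hm _ hrg).1
              simp only at this
              omega
          · have hrn := rng p.2 hc
            rcases hB with hg | ⟨y, hy, hye⟩
            · exfalso
              have := (hm _ hg).1
              simp only at this
              omega
            · simp only [Prod.mk.injEq] at hye
              obtain ⟨h1, h2⟩ := hye
              have hy2 : y = p.2 := by omega
              have : p = (x, z) := Prod.ext hpx (by omega)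
              rw [← this]
              exact hph.1
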